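/- Every sequence of legal moves in the Zeckendorf game starting from n copies of F_1 has length at most ℓ·n, where ℓ is the index of the largest Fibonacci number not exceeding n. -/
import Mathlib

/-- Fibonacci numbers indexed `F_1 = 1, F_2 = 2, F_{i+1} = F_i + F_{i-1}`. -/
def ZFib (i : ℕ) : ℕ := Nat.fib (i + 1)

/-- Legal moves of the Zeckendorf game, on multisets of Fibonacci indices. -/
inductive ZMove : Multiset ℕ → Multiset ℕ → Prop
  | combine (s : Multiset ℕ) (i : ℕ) (h : 2 ≤ i) :
      ZMove ((i - 1) ::ₘ i ::ₘ s) ((i + 1) ::ₘ s)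
  | addOnes (s : Multiset ℕ) :
      ZMove (1 ::ₘ 1 ::ₘ s) (2 ::ₘ s)
  | splitTwos (s : Multiset ℕ) :
      ZMove (2 ::ₘ 2 ::ₘ s) (1 ::ₘ 3 ::ₘ s)
  | split (s : Multiset ℕ) (i : ℕ) (h : 3 ≤ i) :
      ZMove (i ::ₘ i ::ₘ s) ((i - 2) ::ₘ (i + 1) ::ₘ s)

/-- Potential weight: `w 1 = 3`, `w i = i + 3` for `i ≥ 2`. -/
def zw (i : ℕ) : ℕ := if i ≤ 1 then 3 else i + 3

/-- The potential of a position. -/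
def zphi (s : Multiset ℕ) : ℕ := (s.map zw).sum

/-- The (invariant) Fibonacci value of a position. -/
def zval (s : Multiset ℕ) : ℕ := (s.map ZFib).sum

lemma zphi_cons (a : ℕ) (s : Multiset ℕ) : zphi (a ::ₘ s) = zw a + zphi s := by
  simp [zphi]

lemma zval_cons (a : ℕ) (s : Multiset ℕ) : zval (a ::ₘ s) = ZFib a + zval s := by
  simp [zval]

lemma ZFib_pos (i : ℕ) : 0 < ZFib i := Nat.fib_pos.2 (by omega)

lemma ZFib_add (k : ℕ) : ZFib (k + 2) = ZFib (k + 1) + ZFib k := by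
  have := Nat.fib_add_two (n := k + 1)
  simp only [ZFib, show k + 1 + 2 = k + 3 by omega, show k + 1 + 1 = k + 2 by omega,
    show k + 2 + 1 = k + 3 by omega] at this ⊢
  omega

/-- Every move strictly decreases the potential. -/
lemma zmove_phi {s t : Multiset ℕ} (h : ZMove s t) : zphi t + 1 ≤ zphi s := by
  cases h with
  | combine s i hi =>
      simp only [zphi_cons, zw]
      split_ifs <;> omega
  | addOnes s =>
      simp only [zphi_cons, zw]
      split_ifs <;> omega
  | splitTwos s =>
      simp only [zphi_cons, zw]
      split_ifs <;> omega
  | split s i hi =>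
      simp only [zphi_cons, zw]
      split_ifs <;> omega

/-- Every move preserves the Fibonacci value. -/
lemma zmove_val {s t : Multiset ℕ} (h : ZMove s t) : zval t = zval s := by
  cases h with
  | combine s i hi =>
      obtain ⟨k, rfl⟩ : ∃ k, i = k + 2 := ⟨i - 2, by omega⟩
      simp only [zval_cons,
        show k + 2 - 1 = k + 1 by omega, show k + 2 + 1 = k + 3 by omega]
      have h1 := ZFib_add (k + 1)
      simp only [show k + 1 + 2 = k + 3 by omega, show k + 1 + 1 = k + 2 by omega] at h1
      omega
  | addOnes s =>
      have h1 : ZFib 1 = 1 := by decide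
      have h2 : ZFib 2 = 2 := by decide
      simp only [zval_cons, h1, h2]
      omega
  | splitTwos s =>
      have h1 : ZFib 1 = 1 := by decide
      have h2 : ZFib 2 = 2 := by decide
      have h3 : ZFib 3 = 3 := by decide
      simp only [zval_cons, h1, h2, h3]
      omega
  | split s i hi =>
      obtain ⟨k, rfl⟩ : ∃ k, i = k + 3 := ⟨i - 3, by omega⟩
      simp only [zval_cons,
        show k + 3 - 2 = k + 1 by omega, show k + 3 + 1 = k + 4 by omega]
      have h1 := ZFib_add (k + 2)
      have h2 := ZFib_add (k + 1)
      simp only [show k + 2 + 2 = k + 4 by omega, show k + 2 + 1 = k + 3 by omega,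
        show k + 1 + 2 = k + 3 by omega, show k + 1 + 1 = k + 2 by omega] at h1 h2
      omega

/-- The source of any move has value at least 2. -/
lemma zmove_val_ge {s t : Multiset ℕ} (h : ZMove s t) : 2 ≤ zval s := by
  cases h with
  | combine s i hi =>
      simp only [zval_cons]
      have h1 := ZFib_pos (i - 1); have h2 := ZFib_pos i; omega
  | addOnes s =>
      simp only [zval_cons]
      have h1 := ZFib_pos 1; omega
  | splitTwos s =>
      simp only [zval_cons]
      have h1 := ZFib_pos 2; omega
  | split s i hi =>
      simp only [zval_cons]
      have h1 := ZFib_pos i; omega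

/-- The source of any move has at least two elements. -/
lemma zmove_card_ge {s t : Multiset ℕ} (h : ZMove s t) : 2 ≤ Multiset.card s := by
  cases h <;> simp

/-- A move from a position of value at most 2 decreases the cardinality. -/
lemma zmove_card {s t : Multiset ℕ} (h : ZMove s t) (hv : zval s ≤ 2) :
    Multiset.card s = Multiset.card t + 1 := by
  cases h with
  | combine s i hi => simp
  | addOnes s => simp
  | splitTwos s =>
      exfalso
      have h2 : ZFib 2 = 2 := by decide
      simp only [zval_cons, h2] at hv
      omega
  | split s i hi =>
      exfalso
      simp only [zval_cons] at hv
      have h1 : Nat.fib 4 ≤ Nat.fib (i + 1) := Nat.fib_mono (by omega)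
      have h2 : ZFib i ≥ 3 := by
        have : Nat.fib 4 = 3 := by decide
        simpa [ZFib, this] using h1
      omega

/-- Every sequence of legal moves starting from `n` copies of `F_1` has length
at most `ℓ · n`, where `ℓ` is the index of the largest Fibonacci number not
exceeding `n`. -/
theorem game_length_upper_bound (n ℓ L : ℕ) (f : ℕ → Multiset ℕ)
    (hn : 0 < n)
    (hℓ : ZFib ℓ ≤ n) (hmax : ∀ j : ℕ, ZFib j ≤ n → j ≤ ℓ)
    (h0 : f 0 = Multiset.replicate n 1)
    (hmoves : ∀ m < L, ZMove (f m) (f (m + 1))) :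
    L ≤ ℓ * n := by
  have hz1 : ZFib 1 = 1 := by decide
  have hz2 : ZFib 2 = 2 := by decide
  have hz3 : ZFib 3 = 3 := by decide
  have hℓ1 : 1 ≤ ℓ := hmax 1 (by omega)
  -- value invariant
  have hval : ∀ m ≤ L, zval (f m) = n := by
    intro m hm
    induction m with
    | zero =>
        simp [h0, zval, Multiset.map_replicate, Multiset.sum_replicate, hz1]
    | succ k ih =>
        rw [zmove_val (hmoves k (by omega))]
        exact ih (by omega)
  rcases lt_or_ge ℓ 3 with hl3 | hl3
  · -- small cases: n ≤ 2
    have hn2 : n ≤ 2 := by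
      by_contra hc
      have := hmax 3 (by omega)
      omega
    interval_cases n
    · -- n = 1 : no moves possible
      rcases Nat.eq_zero_or_pos L with rfl | hL
      · omega
      · have h1 := zmove_val_ge (hmoves 0 hL)
        have h2 := hval 0 (by omega)
        omega
    · -- n = 2, ℓ = 2
      have hℓ2 : ℓ = 2 := by
        have := hmax 2 (by omega)
        omega
      subst hℓ2
      by_contra hc
      push_neg at hc
      have hc0 : Multiset.card (f 0) = 2 := by simp [h0]
      have hc1 := zmove_card (hmoves 0 (by omega)) (le_of_eq (hval 0 (by omega)))
      have hc2 := zmove_card (hmoves 1 (by omega)) (le_of_eq (hval 1 (by omega)))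
      have hc3 := zmove_card_ge (hmoves 2 (by omega))
      norm_num at hc1 hc2
      omega
  · -- main case ℓ ≥ 3 : potential argument gives L ≤ 3n
    have key : ∀ m ≤ L, zphi (f m) + m ≤ zphi (f 0) := by
      intro m hm
      induction m with
      | zero => simp
      | succ k ih =>
          have h1 := zmove_phi (hmoves k (by omega))
          have h2 := ih (by omega)
          omega
    have hphi0 : zphi (f 0) = 3 * n := by
      simp [h0, zphi, Multiset.map_replicate, Multiset.sum_replicate, zw, mul_comm]
    have hL := key L le_rfl
    calc L ≤ 3 * n := by omega
    _ ≤ ℓ * n := Nat.mul_le_mul_right n hl3
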